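/- arXiv:2109.11841 — 3 statements merged into one kernel-verified Lean document; each statement's English description precedes it below -/
import Mathlib

section
/- Let ∇_t = ∇ + E(t) be a smooth curve of Yang-Mills Hermitian connections with ∇ flat and E(0)=0, and write E(t) = tE₁ + t²E₂ + O(t³). Then ∇E₁ = 0, i.e., E₁ is a ∇-parallel 𝔲(F)-valued 1-form. -/
set_option maxHeartbeats 1000000

open scoped RealInnerProductSpace Topology

/-- along a curve `∇_t = ∇ + E(t)` of Yang–Mills Hermitian
connections with `∇` flat and `E(0) = 0`, writing
`E(t) = tE₁ + t²E₂ + O(t³)`, the first-order term satisfies `∇E₁ = 0`, i.e.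
`E₁` is a `∇`-parallel `𝔲(F)`-valued 1-form.

Model: `V1 = A¹(𝔲(F))`, `V2 = A²(𝔲(F))` with `L²` inner products; `nab` is
the covariant derivative of the flat connection with formal adjoint `δ`
(`⟨∇x,y⟩ = ⟨x,δy⟩`); `W` is the wedge product and `dag x` the adjoint
wedge–bracket operator `x†`.  The Yang–Mills condition at each `t` is the one
of Theorem `Th:YMHat`: `δ(∇E_t) + δ(E_t∧E_t) + E_t†(∇E_t) + E_t†(E_t∧E_t) = 0`.
The coefficients are `E₁ = lim_{t→0} E(t)/t` and
`E₂ = lim_{t→0} (E(t) − tE₁)/t²`. -/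
theorem first_order_term_of_YangMills_curve_is_parallel
    (V1 V2 : Type)
    [NormedAddCommGroup V1] [InnerProductSpace ℝ V1]
    [NormedAddCommGroup V2] [InnerProductSpace ℝ V2]
    (nab : V1 →L[ℝ] V2) (δ : V2 →L[ℝ] V1)
    (hadj : ∀ (x : V1) (y : V2), ⟪nab x, y⟫ = ⟪x, δ y⟫)
    (W : V1 →L[ℝ] V1 →L[ℝ] V2)
    (dag : V1 →L[ℝ] V2 →L[ℝ] V1)
    (E : ℝ → V1) (hE0 : E 0 = 0)
    (E₁ E₂ : V1)
    (hE₁ : Filter.Tendsto (fun t : ℝ => t⁻¹ • E t) (𝓝[≠] 0) (𝓝 E₁))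
    (hE₂ : Filter.Tendsto (fun t : ℝ => (t ^ 2)⁻¹ • (E t - t • E₁))
      (𝓝[≠] 0) (𝓝 E₂))
    (hYM : ∀ t : ℝ,
      δ (nab (E t)) + δ (W (E t) (E t)) + dag (E t) (nab (E t))
        + dag (E t) (W (E t) (E t)) = 0) :
    nab E₁ = 0 := by
  classical
  set g : ℝ → V1 := fun t => t⁻¹ • E t with hg
  set h : ℝ → V1 := fun t =>
    δ (nab (g t)) + t • δ (W (g t) (g t)) + t • dag (g t) (nab (g t))
      + t ^ 2 • dag (g t) (W (g t) (g t)) with hh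
  have ht : Filter.Tendsto (fun t : ℝ => t) (𝓝[≠] (0:ℝ)) (𝓝 0) :=
    Filter.tendsto_id.mono_left nhdsWithin_le_nhds
  have hWg : Filter.Tendsto (fun t => W (g t) (g t)) (𝓝[≠] (0:ℝ)) (𝓝 (W E₁ E₁)) :=
    (W.continuous₂.tendsto (E₁, E₁)).comp (hE₁.prodMk_nhds hE₁)
  have hng : Filter.Tendsto (fun t => nab (g t)) (𝓝[≠] (0:ℝ)) (𝓝 (nab E₁)) :=
    (nab.continuous.tendsto E₁).comp hE₁
  have h1 : Filter.Tendsto (fun t => δ (nab (g t))) (𝓝[≠] (0:ℝ)) (𝓝 (δ (nab E₁))) :=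
    (δ.continuous.tendsto _).comp hng
  have h2a : Filter.Tendsto (fun t => δ (W (g t) (g t))) (𝓝[≠] (0:ℝ)) (𝓝 (δ (W E₁ E₁))) :=
    (δ.continuous.tendsto _).comp hWg
  have h2b : Filter.Tendsto (fun t => dag (g t) (nab (g t))) (𝓝[≠] (0:ℝ))
      (𝓝 (dag E₁ (nab E₁))) :=
    (dag.continuous₂.tendsto (E₁, nab E₁)).comp (hE₁.prodMk_nhds hng)
  have h3 : Filter.Tendsto (fun t => dag (g t) (W (g t) (g t)))
      (𝓝[≠] (0:ℝ)) (𝓝 (dag E₁ (W E₁ E₁))) :=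
    (dag.continuous₂.tendsto (E₁, W E₁ E₁)).comp (hE₁.prodMk_nhds hWg)
  have hlim : Filter.Tendsto h (𝓝[≠] (0:ℝ)) (𝓝 (δ (nab E₁))) := by
    have := ((h1.add (ht.smul h2a)).add (ht.smul h2b)).add ((ht.pow 2).smul h3)
    simpa using this
  have hzero : ∀ᶠ t in 𝓝[≠] (0:ℝ), h t = 0 := by
    filter_upwards [self_mem_nhdsWithin] with t (htne : t ≠ 0)
    have hE : E t = t • g t := by
      simp [hg, smul_smul, mul_inv_cancel₀ htne]
    have key := hYM t
    rw [hE] at key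
    simp only [map_smul, ContinuousLinearMap.map_smul, ContinuousLinearMap.coe_smul',
      Pi.smul_apply, smul_smul] at key
    have heq : h t = t⁻¹ • (t • δ (nab (g t)) + (t * t) • δ (W (g t) (g t))
        + (t * t) • dag (g t) (nab (g t)) + (t * t * t) • dag (g t) (W (g t) (g t))) := by
      have e2 : t ^ 2 * t⁻¹ = t := by
        rw [sq, mul_assoc, mul_inv_cancel₀ htne, mul_one]
      have e3 : t ^ 3 * t⁻¹ = t ^ 2 := by
        rw [pow_succ, mul_assoc, mul_inv_cancel₀ htne, mul_one]
      simp [hh, smul_add, smul_smul, inv_mul_cancel₀ htne]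
      ring_nf
      rw [e2, e3]
    rw [heq, key, smul_zero]
  have hzero' : Filter.Tendsto h (𝓝[≠] (0:ℝ)) (𝓝 0) :=
    Filter.Tendsto.congr' (by filter_upwards [hzero] with t ht using ht.symm)
      tendsto_const_nhds
  have hδ : δ (nab E₁) = 0 := tendsto_nhds_unique hlim hzero'
  have : ⟪nab E₁, nab E₁⟫ = 0 := by
    rw [hadj, hδ, inner_zero_right]
  exact inner_self_eq_zero.mp this
end

section
/- With the notation of the previous statement, the 2-form C_E := ∇E₂ + E₁∧E₁ satisfies δ(C_E) = 0 and ∇(C_E) = 0; hence C_E is harmonic and defines a class in H²(M, 𝒫), the cohomology with coefficients in the sheaf of ∇-parallel sections of 𝔲(F). -/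
open scoped RealInnerProductSpace Topology

set_option maxHeartbeats 1000000 in
/-- along a curve `∇_t = ∇ + E(t)` of Yang–Mills connections
with `∇` flat, `E(t) = tE₁ + t²E₂ + O(t³)` and `∇E₁ = 0` (already known), the
2-form `C_E := ∇E₂ + E₁∧E₁` satisfies `δ(C_E) = 0` and `∇(C_E) = 0`; hence
`C_E` is harmonic and, by `H²(M,𝒫) ≅ Ker Δ₂` (Proposition P:4), it defines a
class in the cohomology `H²(M,𝒫)` with coefficients in the sheaf of
`∇`-parallel sections of `𝔲(F)`.

Model: `V1, V2, V3` are `A¹(𝔲(F)), A²(𝔲(F)), A³(𝔲(F))` with `L²` inner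
products; `nab : V1 → V2` and `nab2 : V2 → V3` are the covariant exterior
derivatives of the flat connection (`nab2 ∘ nab = 0`), `δ` is the formal
adjoint of `nab`, `W` the wedge product, `dag x` the adjoint wedge–bracket
operator `x†`, and `W2, W2'` express the Leibniz rule
`∇(x∧y) = ∇x∧y − x∧∇y` for `𝔲(F)`-valued 1-forms. -/
theorem second_order_class_of_YangMills_curve_is_harmonic
    (V1 V2 V3 : Type)
    [NormedAddCommGroup V1] [InnerProductSpace ℝ V1]
    [NormedAddCommGroup V2] [InnerProductSpace ℝ V2]
    [NormedAddCommGroup V3] [InnerProductSpace ℝ V3]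
    (nab : V1 →L[ℝ] V2) (nab2 : V2 →L[ℝ] V3)
    (hflat : ∀ x : V1, nab2 (nab x) = 0)
    (δ : V2 →L[ℝ] V1)
    (hadj : ∀ (x : V1) (y : V2), ⟪nab x, y⟫ = ⟪x, δ y⟫)
    (W : V1 →L[ℝ] V1 →L[ℝ] V2)
    (W2 : V2 →L[ℝ] V1 →L[ℝ] V3) (W2' : V1 →L[ℝ] V2 →L[ℝ] V3)
    (hLeib : ∀ x y : V1, nab2 (W x y) = W2 (nab x) y - W2' x (nab y))
    (dag : V1 →L[ℝ] V2 →L[ℝ] V1)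
    (E : ℝ → V1) (hE0 : E 0 = 0)
    (E₁ E₂ : V1)
    (hE₁ : Filter.Tendsto (fun t : ℝ => t⁻¹ • E t) (𝓝[≠] 0) (𝓝 E₁))
    (hE₂ : Filter.Tendsto (fun t : ℝ => (t ^ 2)⁻¹ • (E t - t • E₁))
      (𝓝[≠] 0) (𝓝 E₂))
    (hYM : ∀ t : ℝ,
      δ (nab (E t)) + δ (W (E t) (E t)) + dag (E t) (nab (E t))
        + dag (E t) (W (E t) (E t)) = 0)
    (hE₁flat : nab E₁ = 0) :
    δ (nab E₂ + W E₁ E₁) = 0 ∧ nab2 (nab E₂ + W E₁ E₁) = 0 := by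

  have hW2 : nab2 (nab E₂ + W E₁ E₁) = 0 := by
    rw [map_add, hflat, hLeib, hE₁flat, map_zero, map_zero]
    simp
  refine ⟨?_, hW2⟩
  -- limits
  have hEzero : Filter.Tendsto E (𝓝[≠] (0:ℝ)) (𝓝 0) := by
    have : Filter.Tendsto (fun t : ℝ => t • (t⁻¹ • E t)) (𝓝[≠] (0:ℝ)) (𝓝 ((0:ℝ) • E₁)) :=
      (Filter.tendsto_id.mono_left nhdsWithin_le_nhds).smul hE₁
    rw [zero_smul] at this
    refine this.congr' ?_
    filter_upwards [self_mem_nhdsWithin] with t ht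
    rw [smul_smul, mul_inv_cancel₀ ht, one_smul]
  have hsmall : Filter.Tendsto (fun t : ℝ => t⁻¹ • (E t - t • E₁)) (𝓝[≠] (0:ℝ)) (𝓝 0) := by
    have : Filter.Tendsto (fun t : ℝ => t • ((t ^ 2)⁻¹ • (E t - t • E₁))) (𝓝[≠] (0:ℝ))
        (𝓝 ((0:ℝ) • E₂)) :=
      (Filter.tendsto_id.mono_left nhdsWithin_le_nhds).smul hE₂
    rw [zero_smul] at this
    refine this.congr' ?_
    filter_upwards [self_mem_nhdsWithin] with t ht
    rw [smul_smul, sq, mul_inv, ← mul_assoc, mul_inv_cancel₀ ht, one_mul]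
  -- the four terms
  have hA : Filter.Tendsto (fun t : ℝ => ((t ^ 2)⁻¹ : ℝ) • δ (nab (E t))) (𝓝[≠] (0:ℝ))
      (𝓝 (δ (nab E₂))) := by
    have := ((δ.comp nab).continuous.tendsto E₂).comp hE₂
    refine this.congr ?_
    intro t
    simp only [Function.comp, ContinuousLinearMap.coe_comp', map_smul, map_sub, map_smul,
      hE₁flat, map_zero, smul_zero, sub_zero]
  have hB : Filter.Tendsto (fun t : ℝ => ((t ^ 2)⁻¹ : ℝ) • δ (W (E t) (E t))) (𝓝[≠] (0:ℝ))
      (𝓝 (δ (W E₁ E₁))) := by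
    have hWc : Continuous fun p : V1 × V1 => W p.1 p.2 := W.continuous₂
    have h2 : Filter.Tendsto (fun t : ℝ => W (t⁻¹ • E t) (t⁻¹ • E t)) (𝓝[≠] (0:ℝ))
        (𝓝 (W E₁ E₁)) := (hWc.tendsto (E₁, E₁)).comp (hE₁.prodMk_nhds hE₁)
    have h3 := (δ.continuous.tendsto (W E₁ E₁)).comp h2
    refine h3.congr' ?_
    filter_upwards [self_mem_nhdsWithin] with t ht
    show δ (W (t⁻¹ • E t) (t⁻¹ • E t)) = (t ^ 2)⁻¹ • δ (W (E t) (E t))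
    rw [map_smul W, ContinuousLinearMap.smul_apply, (W (E t)).map_smul, map_smul δ,
      map_smul δ, smul_smul, sq, mul_inv]
  have hC : Filter.Tendsto (fun t : ℝ => ((t ^ 2)⁻¹ : ℝ) • dag (E t) (nab (E t))) (𝓝[≠] (0:ℝ))
      (𝓝 0) := by
    have hdagc : Continuous fun p : V1 × V2 => dag p.1 p.2 := dag.continuous₂
    have hnsmall : Filter.Tendsto (fun t : ℝ => t⁻¹ • nab (E t - t • E₁)) (𝓝[≠] (0:ℝ))
        (𝓝 0) := by
      have := (nab.continuous.tendsto 0).comp hsmall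
      rw [map_zero] at this
      refine this.congr ?_
      intro t
      simp [Function.comp]
    have h2 : Filter.Tendsto (fun t : ℝ => dag (t⁻¹ • E t) (t⁻¹ • nab (E t - t • E₁)))
        (𝓝[≠] (0:ℝ)) (𝓝 (dag E₁ 0)) := (hdagc.tendsto (E₁, 0)).comp (hE₁.prodMk_nhds hnsmall)
    rw [map_zero] at h2
    refine h2.congr' ?_
    filter_upwards [self_mem_nhdsWithin] with t ht
    simp only [map_sub, map_smul, hE₁flat, smul_zero, sub_zero, ContinuousLinearMap.smul_apply,
      ContinuousLinearMap.map_smul, smul_smul]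
    rw [sq, mul_inv]
  have hD : Filter.Tendsto (fun t : ℝ => ((t ^ 2)⁻¹ : ℝ) • dag (E t) (W (E t) (E t)))
      (𝓝[≠] (0:ℝ)) (𝓝 0) := by
    have hdagc : Continuous fun p : V1 × V2 => dag p.1 p.2 := dag.continuous₂
    have hWc : Continuous fun p : V1 × V1 => W p.1 p.2 := W.continuous₂
    have hW2 : Filter.Tendsto (fun t : ℝ => W (t⁻¹ • E t) (t⁻¹ • E t)) (𝓝[≠] (0:ℝ))
        (𝓝 (W E₁ E₁)) := (hWc.tendsto (E₁, E₁)).comp (hE₁.prodMk_nhds hE₁)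
    have h2 : Filter.Tendsto (fun t : ℝ => dag (E t) (W (t⁻¹ • E t) (t⁻¹ • E t)))
        (𝓝[≠] (0:ℝ)) (𝓝 (dag 0 (W E₁ E₁))) :=
      (hdagc.tendsto (0, W E₁ E₁)).comp (hEzero.prodMk_nhds hW2)
    simp only [ContinuousLinearMap.zero_apply, map_zero] at h2
    refine h2.congr' ?_
    filter_upwards [self_mem_nhdsWithin] with t ht
    simp only [map_smul, ContinuousLinearMap.smul_apply, ContinuousLinearMap.map_smul, smul_smul]
    rw [sq, mul_inv]
  have hsum : Filter.Tendsto (fun t : ℝ => ((t ^ 2)⁻¹ : ℝ) •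
      (δ (nab (E t)) + δ (W (E t) (E t)) + dag (E t) (nab (E t))
        + dag (E t) (W (E t) (E t)))) (𝓝[≠] (0:ℝ))
      (𝓝 (δ (nab E₂) + δ (W E₁ E₁) + 0 + 0)) := by
    refine (((hA.add hB).add hC).add hD).congr ?_
    intro t
    simp only [smul_add]
  have hzero : Filter.Tendsto (fun t : ℝ => ((t ^ 2)⁻¹ : ℝ) •
      (δ (nab (E t)) + δ (W (E t) (E t)) + dag (E t) (nab (E t))
        + dag (E t) (W (E t) (E t)))) (𝓝[≠] (0:ℝ)) (𝓝 0) := by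
    have heq : (fun t : ℝ => ((t ^ 2)⁻¹ : ℝ) •
        (δ (nab (E t)) + δ (W (E t) (E t)) + dag (E t) (nab (E t))
          + dag (E t) (W (E t) (E t)))) = fun _ => (0 : V1) := by
      funext t
      rw [hYM t, smul_zero]
    rw [heq]
    exact tendsto_const_nhds
  have := tendsto_nhds_unique hsum hzero
  rw [add_zero, add_zero] at this
  rw [map_add, this]
end

section
/- A holomorphic vector bundle F over a complex manifold X admits a holomorphic connection if and only if the short exact sequence 0 → Ω¹(F) → J¹(F) → F → 0 of the first jet bundle splits as a sequence of 𝒪-modules; equivalently, iff the Atiyah class a(F) ∈ Ext¹(F, Ω¹⊗F) vanishes. -/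
open TensorProduct

/-- a holomorphic vector bundle `F` admits a holomorphic
connection iff the first-jet short exact sequence
`0 → Ω¹(F) → J¹(F) → F → 0` splits as a sequence of `𝒪`-modules — which is
exactly the vanishing of the Atiyah class `a(F) ∈ Ext¹(F, Ω¹⊗F)`, since
`a(F)` is by definition the class of this extension.

Model: `A = 𝒪` (functions), `Ω` the 1-forms with differential `d`, `F` the
sections of the bundle, `J = J¹(F)`, with `A`-linear maps
`i : Ω ⊗ F → J`, `π : J → F` forming a short exact sequence, and the
ℂ-linear (additive) jet prolongation `j¹ : F → J` satisfying `π ∘ j¹ = id`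
and `j¹(fσ) = i(df ⊗ σ) + f • j¹σ`.  Then `F` has a holomorphic connection
(an additive `∇ : F → Ω¹ ⊗ F` with `∇(fσ) = df ⊗ σ + f∇σ`) iff `π` has an
`A`-linear right inverse, i.e. the sequence splits. -/
theorem holomorphic_connection_iff_jet_sequence_splits
    (A Ω F J : Type) [CommRing A] [AddCommGroup Ω] [Module A Ω]
    [AddCommGroup F] [Module A F] [AddCommGroup J] [Module A J]
    (d : A → Ω)
    (i : TensorProduct A Ω F →ₗ[A] J) (π : J →ₗ[A] F)
    (hi : Function.Injective i)
    (hexact : ∀ x : J, π x = 0 ↔ x ∈ Set.range i)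
    (hsurj : Function.Surjective π)
    (j1 : F →+ J)
    (hπj1 : ∀ σ : F, π (j1 σ) = σ)
    (hj1 : ∀ (f : A) (σ : F), j1 (f • σ) = i (d f ⊗ₜ[A] σ) + f • j1 σ) :
    (∃ D : F →+ TensorProduct A Ω F,
        ∀ (f : A) (σ : F), D (f • σ) = d f ⊗ₜ[A] σ + f • D σ) ↔
      (∃ s : F →ₗ[A] J, ∀ σ : F, π (s σ) = σ) := by
  have hπi : ∀ x, π (i x) = 0 := fun x => (hexact (i x)).2 ⟨x, rfl⟩
  constructor
  · rintro ⟨D, hD⟩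
    refine ⟨{ toFun := fun σ => j1 σ - i (D σ), map_add' := ?_, map_smul' := ?_ }, ?_⟩
    · intro x y; simp only [map_add]; abel
    · intro f σ
      simp only [hj1, hD, map_add, RingHom.id_apply, smul_sub, map_smul]
      abel
    · intro σ
      simp [hπj1, hπi]
  · rintro ⟨s, hs⟩
    have hmem : ∀ σ : F, ∃ x, i x = j1 σ - s σ := by
      intro σ
      have : π (j1 σ - s σ) = 0 := by simp [hπj1, hs]
      exact (hexact _).1 this
    choose c hc using hmem
    refine ⟨{ toFun := c, map_zero' := ?_, map_add' := ?_ }, ?_⟩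
    · apply hi; simp [hc]
    · intro σ τ; apply hi
      simp only [map_add, hc]; abel
    · intro f σ; apply hi
      simp only [AddMonoidHom.coe_mk, ZeroHom.coe_mk, map_add, map_smul, hc, hj1,
        map_smul s, smul_sub]
      abel
end
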